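/- Let q be a prime power, n ≥ 1, and 0 ≤ k ≤ 2q^{n-1} - 1. Then in F_p, binom(2q^n - 2 - k(q-1), k)·(-1)^k equals 1 if k ∈ {0, 1, 1+q, 1+q+q^2, ..., 1+q+⋯+q^{n-1}}, and equals 0 otherwise. -/
import Mathlib

open Finset

private lemma lucasQ {p : ℕ} [hp : Fact p.Prime] (s n k : ℕ) :
    (Nat.choose n k : ZMod p) =
      (Nat.choose (n / p ^ s) (k / p ^ s) : ZMod p) * Nat.choose (n % p ^ s) (k % p ^ s) := by
  have hd : ∀ m i, i < s → (m % p ^ s) / p ^ i % p = m / p ^ i % p := by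
    intro m i hi
    have hps : p ^ s = p ^ i * p ^ (s - i) := by rw [← pow_add]; congr 1; omega
    rw [hps, Nat.mod_mul_right_div_self, Nat.mod_mod_of_dvd _ (dvd_pow_self p (by omega))]
  have hpos : 0 < p ^ s := pow_pos hp.out.pos s
  have h2 := Choose.choose_modEq_prod_range_choose (p := p) (n := n % p ^ s) (k := k % p ^ s)
      (Nat.mod_lt n hpos) (Nat.mod_lt k hpos)
  have hprod : ∏ i ∈ range s, Nat.choose ((n % p ^ s) / p ^ i % p) ((k % p ^ s) / p ^ i % p)
      = ∏ i ∈ range s, Nat.choose (n / p ^ i % p) (k / p ^ i % p) :=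
    Finset.prod_congr rfl fun i hi => by rw [hd n i (mem_range.mp hi), hd k i (mem_range.mp hi)]
  rw [← Nat.cast_prod, hprod] at h2
  have h1 := (Choose.choose_modEq_choose_mul_prod_range_choose (n := n) (k := k) (p := p) s).trans
    (Int.ModEq.mul_left _ h2.symm)
  have := (ZMod.intCast_eq_intCast_iff _ _ _).mpr h1
  push_cast at this
  exact this

private lemma lucasQ' {p : ℕ} [hp : Fact p.Prime] {q : ℕ} (s : ℕ) (hq : q = p ^ s)
    (a c : ℕ) {b d : ℕ} (hb : b < q) (hd : d < q) :
    (Nat.choose (q * a + b) (q * c + d) : ZMod p) =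
      (Nat.choose a c : ZMod p) * Nat.choose b d := by
  subst hq
  have h0 : 0 < p ^ s := pow_pos hp.out.pos s
  rw [lucasQ s, Nat.mul_add_div h0, Nat.mul_add_div h0, Nat.div_eq_of_lt hb, Nat.div_eq_of_lt hd,
    Nat.mul_add_mod, Nat.mul_add_mod, Nat.mod_eq_of_lt hb, Nat.mod_eq_of_lt hd, add_zero, add_zero]

section main

variable {p s q : ℕ} [hp : Fact p.Prime]

private lemma lemB (hq : q = p ^ s) (hs : s ≠ 0) :
    ∀ m A k, 1 ≤ k → k + 1 ≤ 2 * q ^ m → A + (k * (q - 1) + 1) = 2 * q ^ (m + 1) →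
      (Nat.choose A k : ZMod p) = 0 := by
  have hq2 : 2 ≤ q := by subst hq; exact Nat.one_lt_pow hs hp.out.one_lt
  have hq0 : (q : ZMod p) = 0 := by
    subst hq; push_cast; rw [ZMod.natCast_self, zero_pow hs]
  intro m
  induction m with
  | zero =>
    intro A k hk1 hk2 hA
    rw [pow_zero] at hk2
    have hk : k = 1 := by omega
    subst hk
    rw [zero_add, pow_one, one_mul] at hA
    have hA' : A = q := by omega
    rw [hA', Nat.choose_one_right]
    exact hq0
  | succ m ih =>
    intro A k hk1 hk2 hA
    have hqpos : 0 < q := by omega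
    have hkd : q * (k / q) + k % q = k := Nat.div_add_mod k q
    have hk0lt : k % q < q := Nat.mod_lt k hqpos
    rw [show m + 1 + 1 = (m + 1) + 1 from rfl, pow_succ] at hA
    have hklt : k < 2 * q ^ (m + 1) := hk2
    have hk₁lt : k / q < 2 * q ^ m := by
      rw [Nat.div_lt_iff_lt_mul hqpos, mul_assoc, ← pow_succ]
      exact hklt
    have hQmpos : 1 ≤ q ^ m := pow_pos hqpos m
    have h2Qm : 1 ≤ 2 * q ^ m := le_trans hQmpos (Nat.le_mul_of_pos_left _ (by norm_num))
    by_cases h0 : k % q = 0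
    · rw [h0, add_zero] at hkd
      have hk₁pos : 1 ≤ k / q := by
        rcases Nat.eq_zero_or_pos (k / q) with h | h
        · rw [h, mul_zero] at hkd; omega
        · exact h
      have hNle : (k / q) * (q - 1) + 1 ≤ 2 * q ^ (m + 1) := by
        calc (k / q) * (q - 1) + 1 ≤ (2 * q ^ m) * (q - 1) + 2 * q ^ m :=
              add_le_add (Nat.mul_le_mul_right _ (le_of_lt hk₁lt)) h2Qm
          _ = 2 * q ^ (m + 1) := by
              have h1 : q - 1 + 1 = q := by omega
              calc (2 * q ^ m) * (q - 1) + 2 * q ^ m = 2 * q ^ m * ((q - 1) + 1) := by ring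
                _ = 2 * q ^ (m + 1) := by rw [h1, pow_succ]; ring
      obtain ⟨A₁, hA₁⟩ : ∃ A₁, A₁ + ((k / q) * (q - 1) + 1) = 2 * q ^ (m + 1) :=
        ⟨2 * q ^ (m + 1) - ((k / q) * (q - 1) + 1), Nat.sub_add_cancel hNle⟩
      have hrep : A = q * A₁ + (q - 1) := by
        zify [show 1 ≤ q by omega] at hA hA₁ hkd ⊢
        linear_combination hA - (q : ℤ) * hA₁ + ((q : ℤ) - 1) * hkd
      have hc := lucasQ' s hq A₁ (k / q) (b := q - 1) (d := 0)
        (by omega : q - 1 < q) hqpos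
      rw [add_zero, hkd, ← hrep] at hc
      rw [hc, ih A₁ (k / q) hk₁pos hk₁lt hA₁, zero_mul]
    · obtain ⟨a, ha⟩ : ∃ a, a + k = 2 * q ^ (m + 1) + k / q :=
        ⟨2 * q ^ (m + 1) + k / q - k,
          Nat.sub_add_cancel (le_trans (Nat.le_of_succ_le hk2) (Nat.le_add_right _ _))⟩
      have hrep : A = q * a + (k % q - 1) := by
        zify [show 1 ≤ q by omega, show 1 ≤ k % q by omega] at hA ha hkd ⊢
        linear_combination hA - (q : ℤ) * ha - hkd
      have hc := lucasQ' s hq a (k / q) (b := k % q - 1) (d := k % q)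
        (lt_of_le_of_lt (Nat.sub_le _ _) hk0lt) hk0lt
      rw [hkd, ← hrep] at hc
      rw [hc, Nat.choose_eq_zero_of_lt (Nat.sub_lt (by omega) one_pos), Nat.cast_zero, mul_zero]

private lemma lemT (hq : q = p ^ s) (hs : s ≠ 0) :
    ∀ m A k, k + 1 ≤ 2 * q ^ m → A + (k * (q - 1) + 2) = 2 * q ^ (m + 1) →
      (Nat.choose A k : ZMod p) * (-1) ^ k =
        if k = 0 ∨ ∃ i < m + 1, k = ∑ j ∈ range (i + 1), q ^ j then 1 else 0 := by
  have hq2 : 2 ≤ q := by subst hq; exact Nat.one_lt_pow hs hp.out.one_lt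
  have hq0 : (q : ZMod p) = 0 := by
    subst hq; push_cast; rw [ZMod.natCast_self, zero_pow hs]
  have hgeom : ∀ i, ∑ j ∈ range (i + 2), q ^ j = q * (∑ j ∈ range (i + 1), q ^ j) + 1 := by
    intro i
    rw [Finset.sum_range_succ' _ (i + 1)]
    simp only [pow_succ']
    rw [← Finset.mul_sum, pow_zero]
  have hSmod : ∀ i, (∑ j ∈ range (i + 1), q ^ j) % q = 1 := by
    intro i
    cases i with
    | zero => simp [Nat.mod_eq_of_lt (show 1 < q by omega)]
    | succ i => rw [hgeom i, Nat.mul_add_mod]; exact Nat.mod_eq_of_lt (by omega)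
  intro m
  induction m with
  | zero =>
    intro A k hk2 hA
    rw [pow_zero] at hk2
    rcases (show k = 0 ∨ k = 1 by omega) with hk | hk
    · subst hk
      simp
    · subst hk
      rw [zero_add, pow_one, one_mul] at hA
      have hA' : A + 1 = q := by omega
      have hAz : (A : ZMod p) = -1 := by
        have := congrArg (Nat.cast : ℕ → ZMod p) hA'
        push_cast at this
        rw [hq0] at this
        linear_combination this
      rw [Nat.choose_one_right, hAz,
        if_pos (Or.inr ⟨0, by norm_num, by rw [Finset.sum_range_one, pow_zero]⟩)]
      ring
  | succ m ih =>
    intro A k hk2 hA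
    have hqpos : 0 < q := by omega
    have hkd : q * (k / q) + k % q = k := Nat.div_add_mod k q
    have hk0lt : k % q < q := Nat.mod_lt k hqpos
    rw [show m + 1 + 1 = (m + 1) + 1 from rfl, pow_succ] at hA
    have hklt : k < 2 * q ^ (m + 1) := hk2
    have hk₁lt : k / q < 2 * q ^ m := by
      rw [Nat.div_lt_iff_lt_mul hqpos, mul_assoc, ← pow_succ]
      exact hklt
    have hQmpos : 1 ≤ q ^ m := pow_pos hqpos m
    have h2Qm : 1 ≤ 2 * q ^ m := le_trans hQmpos (Nat.le_mul_of_pos_left _ (by norm_num))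
    have hprodeq : ∀ c : ℕ, (2 * q ^ m) * (q - 1) + 2 * q ^ m = 2 * q ^ (m + 1) := by
      intro _
      have h1 : q - 1 + 1 = q := by omega
      calc (2 * q ^ m) * (q - 1) + 2 * q ^ m = 2 * q ^ m * ((q - 1) + 1) := by ring
        _ = 2 * q ^ (m + 1) := by rw [h1, pow_succ]; ring
    by_cases hk0 : k = 0
    · subst hk0
      simp
    · rcases (show k % q = 0 ∨ k % q = 1 ∨ 2 ≤ k % q by omega) with h0 | h0 | h0
      · -- k ≡ 0 mod q, k ≥ 1 : both sides 0
        rw [h0, add_zero] at hkd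
        have hk₁pos : 1 ≤ k / q := by
          rcases Nat.eq_zero_or_pos (k / q) with h | h
          · rw [h, mul_zero] at hkd; omega
          · exact h
        have hNle : (k / q) * (q - 1) + 1 ≤ 2 * q ^ (m + 1) := by
          calc (k / q) * (q - 1) + 1 ≤ (2 * q ^ m) * (q - 1) + 2 * q ^ m :=
                add_le_add (Nat.mul_le_mul_right _ (le_of_lt hk₁lt)) h2Qm
            _ = 2 * q ^ (m + 1) := hprodeq 0
        obtain ⟨A₁, hA₁⟩ : ∃ A₁, A₁ + ((k / q) * (q - 1) + 1) = 2 * q ^ (m + 1) :=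
          ⟨2 * q ^ (m + 1) - ((k / q) * (q - 1) + 1), Nat.sub_add_cancel hNle⟩
        have hrep : A = q * A₁ + (q - 2) := by
          zify [show 1 ≤ q by omega, show 2 ≤ q by omega] at hA hA₁ hkd ⊢
          linear_combination hA - (q : ℤ) * hA₁ + ((q : ℤ) - 1) * hkd
        have hc := lucasQ' s hq A₁ (k / q) (b := q - 2) (d := 0)
          (by omega : q - 2 < q) hqpos
        rw [add_zero, hkd, ← hrep] at hc
        rw [hc, lemB hq hs m A₁ (k / q) hk₁pos hk₁lt hA₁, zero_mul, zero_mul]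
        rw [if_neg]
        rintro (h | ⟨i, hi, hSi⟩)
        · omega
        · have := hSmod i
          rw [← hSi] at this
          omega
      · -- k ≡ 1 mod q : inductive case
        have hk₁le : k / q + 1 ≤ 2 * q ^ m := hk₁lt
        have hNle : (k / q) * (q - 1) + 2 ≤ 2 * q ^ (m + 1) := by
          calc (k / q) * (q - 1) + 2 ≤ (2 * q ^ m) * (q - 1) + 2 * q ^ m :=
                add_le_add (Nat.mul_le_mul_right _ (le_of_lt hk₁lt)) (by omega)
            _ = 2 * q ^ (m + 1) := hprodeq 0
        obtain ⟨A₁, hA₁⟩ : ∃ A₁, A₁ + ((k / q) * (q - 1) + 2) = 2 * q ^ (m + 1) :=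
          ⟨2 * q ^ (m + 1) - ((k / q) * (q - 1) + 2), Nat.sub_add_cancel hNle⟩
        rw [h0] at hkd
        have hrep : A = q * A₁ + (q - 1) := by
          zify [show 1 ≤ q by omega] at hA hA₁ hkd ⊢
          linear_combination hA - (q : ℤ) * hA₁ + ((q : ℤ) - 1) * hkd
        have hqm1 : ((q - 1 : ℕ) : ZMod p) = -1 := by
          rw [Nat.cast_sub (by omega : 1 ≤ q), hq0, Nat.cast_one, zero_sub]
        have hsign : ((-1 : ZMod p)) ^ (q * (k / q)) = (-1) ^ (k / q) := by
          by_cases hp2 : p = 2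
          · subst hp2
            have hne : (-1 : ZMod 2) = 1 := rfl
            rw [hne, one_pow, one_pow]
          · have hodd : Odd q := hq ▸ (hp.out.odd_of_ne_two hp2).pow
            rw [pow_mul, hodd.neg_one_pow]
        have hmain := ih A₁ (k / q) hk₁le hA₁
        have hcond : (k / q = 0 ∨ ∃ i < m + 1, k / q = ∑ j ∈ range (i + 1), q ^ j) ↔
            (k = 0 ∨ ∃ i < m + 1 + 1, k = ∑ j ∈ range (i + 1), q ^ j) := by
          constructor
          · rintro (h | ⟨i, hi, hSi⟩)
            · refine Or.inr ⟨0, by omega, ?_⟩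
              rw [show (0 : ℕ) + 1 = 1 from rfl, Finset.sum_range_one, pow_zero]
              rw [h, mul_zero] at hkd
              omega
            · refine Or.inr ⟨i + 1, by omega, ?_⟩
              rw [show i + 1 + 1 = i + 2 from rfl, hgeom i, ← hSi]
              omega
          · rintro (h | ⟨i, hi, hSi⟩)
            · omega
            · cases i with
              | zero =>
                left
                rw [show (0 : ℕ) + 1 = 1 from rfl, Finset.sum_range_one, pow_zero] at hSi
                have hz : q * (k / q) = 0 := by omega
                rcases Nat.mul_eq_zero.mp hz with h | h
                · omega
                · exact h
              | succ i =>
                right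
                refine ⟨i, by omega, ?_⟩
                rw [show i + 1 + 1 = i + 2 from rfl, hgeom i] at hSi
                have : q * (k / q) = q * (∑ j ∈ range (i + 1), q ^ j) := by omega
                exact Nat.eq_of_mul_eq_mul_left hqpos this
        have hc := lucasQ' s hq A₁ (k / q) (b := q - 1) (d := 1)
          (by omega : q - 1 < q) (by omega : 1 < q)
        rw [hkd, ← hrep] at hc
        have hkpow : ((-1 : ZMod p)) ^ k = (-1) ^ (k / q) * (-1) := by
          conv_lhs => rw [← hkd]
          rw [pow_succ, hsign]
        rw [hc, Nat.choose_one_right, hqm1, hkpow]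
        calc (Nat.choose A₁ (k / q) : ZMod p) * (-1) * ((-1) ^ (k / q) * (-1))
            = (Nat.choose A₁ (k / q) : ZMod p) * (-1) ^ (k / q) := by ring
          _ = if k / q = 0 ∨ ∃ i < m + 1, k / q = ∑ j ∈ range (i + 1), q ^ j then 1 else 0 :=
              hmain
          _ = if k = 0 ∨ ∃ i < m + 1 + 1, k = ∑ j ∈ range (i + 1), q ^ j then 1 else 0 :=
              if_congr hcond rfl rfl
      · -- k ≡ k₀ ≥ 2 mod q : both sides 0
        obtain ⟨a, ha⟩ : ∃ a, a + k = 2 * q ^ (m + 1) + k / q :=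
          ⟨2 * q ^ (m + 1) + k / q - k,
            Nat.sub_add_cancel (le_trans (Nat.le_of_succ_le hk2) (Nat.le_add_right _ _))⟩
        have hrep : A = q * a + (k % q - 2) := by
          zify [show 1 ≤ q by omega, show 2 ≤ k % q by omega] at hA ha hkd ⊢
          linear_combination hA - (q : ℤ) * ha - hkd
        have hc := lucasQ' s hq a (k / q) (b := k % q - 2) (d := k % q)
          (lt_of_le_of_lt (Nat.sub_le _ _) hk0lt) hk0lt
        rw [hkd, ← hrep] at hc
        rw [hc, Nat.choose_eq_zero_of_lt (Nat.sub_lt (by omega) two_pos), Nat.cast_zero,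
          mul_zero, zero_mul]
        rw [if_neg]
        rintro (h | ⟨i, hi, hSi⟩)
        · omega
        · have := hSmod i
          rw [← hSi] at this
          omega

end main

/-- For `q = p^s`, `n ≥ 1`, `0 ≤ k ≤ 2q^{n-1} - 1`, in `F_p`:
`C(2q^n - 2 - k(q-1), k)·(-1)^k = 1` if `k ∈ {0, 1, 1+q, …, 1+q+⋯+q^{n-1}}`, else `0`. -/
theorem stmt_2 (p s q : ℕ) (hp : p.Prime) (hs : 0 < s) (hq : q = p ^ s)
    (n k : ℕ) (hn : 1 ≤ n) (hk : k ≤ 2 * q ^ (n - 1) - 1) :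
    ((Nat.choose (2 * q ^ n - 2 - k * (q - 1)) k : ZMod p) * (-1) ^ k) =
      (if k = 0 ∨ ∃ i < n, k = ∑ j ∈ Finset.range (i + 1), q ^ j then 1 else 0) := by
  haveI : Fact p.Prime := ⟨hp⟩
  obtain ⟨m, rfl⟩ : ∃ m, n = m + 1 := ⟨n - 1, by omega⟩
  rw [show m + 1 - 1 = m from rfl] at hk
  have hq2 : 2 ≤ q := by subst hq; exact Nat.one_lt_pow (by omega) hp.one_lt
  have hQmpos : 1 ≤ q ^ m := pow_pos (show 0 < q by omega) m
  have h2Qm : 1 ≤ 2 * q ^ m := le_trans hQmpos (Nat.le_mul_of_pos_left _ (by norm_num))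
  have hk' : k + 1 ≤ 2 * q ^ m :=
    calc k + 1 ≤ 2 * q ^ m - 1 + 1 := Nat.add_le_add_right hk 1
      _ = 2 * q ^ m := Nat.sub_add_cancel h2Qm
  have hble : k * (q - 1) + 2 ≤ 2 * q ^ (m + 1) := by
    calc k * (q - 1) + 2 ≤ (2 * q ^ m) * (q - 1) + 2 * q ^ m :=
          add_le_add (Nat.mul_le_mul_right _ (Nat.le_of_succ_le hk'))
            (le_trans (by norm_num : (2:ℕ) ≤ 2 * 1) (Nat.mul_le_mul_left 2 hQmpos))
      _ = 2 * q ^ (m + 1) := by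
          have h1 : q - 1 + 1 = q := by omega
          calc (2 * q ^ m) * (q - 1) + 2 * q ^ m = 2 * q ^ m * ((q - 1) + 1) := by ring
            _ = 2 * q ^ (m + 1) := by rw [h1, pow_succ]; ring
  have hA : 2 * q ^ (m + 1) - 2 - k * (q - 1) + (k * (q - 1) + 2) = 2 * q ^ (m + 1) := by
    rw [Nat.sub_sub, show 2 + k * (q - 1) = k * (q - 1) + 2 by ring]
    exact Nat.sub_add_cancel hble
  exact lemT hq (by omega) m _ k hk' hA
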